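/- Let k ≥ 2 be an integer and let E_k = gcd(2^k − 1, k). Every integer N > 2^{k² + k} can be written as a finite sum of elements of the set E_k^{−1}·S_k = { s/E_k : s ∈ S_k }; equivalently, the Frobenius number F_k of E_k^{−1}·S_k satisfies F_k ≤ 2^{k² + k}. -/

import Mathlib

/-- `ck k n = 1 + 2^n + 2^(2n) + ⋯ + 2^((k-1)n)`. -/
def ck (k n : ℕ) : ℕ := ∑ i ∈ Finset.range k, 2 ^ (i * n)

/-- `m` is a binary `k`'th power: `m = a * ck k n` for some `n ≥ 1` and `2^(n-1) ≤ a < 2^n`. -/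
def IsBinaryKthPower (k m : ℕ) : Prop :=
  ∃ n a : ℕ, 1 ≤ n ∧ 2 ^ (n - 1) ≤ a ∧ a < 2 ^ n ∧ m = a * ck k n

/-- Any `x ≥ m` is a sum of elements of the interval `[m, 2m)`. -/
lemma parts_lemma : ∀ x m : ℕ, 0 < m → m ≤ x →
    ∃ l : Multiset ℕ, (∀ a ∈ l, m ≤ a ∧ a < 2 * m) ∧ l.sum = x := by
  intro x
  induction x using Nat.strong_induction_on with
  | _ x ih =>
    intro m hm hx
    by_cases h : x < 2 * m
    · exact ⟨{x}, by intro a ha; rw [Multiset.mem_singleton] at ha; omega, by simp⟩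
    · obtain ⟨l, hl, hs⟩ := ih (x - m) (by omega) m hm (by omega)
      refine ⟨m ::ₘ l, ?_, by simp [hs]; omega⟩
      intro a ha
      rw [Multiset.mem_cons] at ha
      rcases ha with rfl | ha
      · omega
      · exact hl a ha

/-- A residue class hits any interval of length `n`. -/
lemma exists_in_interval (a n b lo : ℕ) (hn : 0 < n) (h : Nat.Coprime a n) :
    ∃ x, lo ≤ x ∧ x < lo + n ∧ a * x ≡ b [MOD n] := by
  obtain ⟨u, hu⟩ : ∃ u, a * u % n = 1 % n := by
    rcases Nat.lt_or_ge 1 n with h1 | h1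
    · obtain ⟨u, -, hu⟩ := Nat.exists_mul_mod_eq_one_of_coprime h h1
      exact ⟨u, by rw [hu, Nat.one_mod_eq_one.mpr (by omega)]⟩
    · have hn1 : n = 1 := by omega
      subst hn1
      exact ⟨0, by simp [Nat.mod_one]⟩
  set t := b * u % n with ht
  have htlt : t < n := Nat.mod_lt _ hn
  set s := t + n - lo % n with hs
  have hr : s % n < n := Nat.mod_lt _ hn
  refine ⟨lo + s % n, by omega, by omega, ?_⟩
  have h6 : n ∣ (n + (lo - lo % n)) := Dvd.dvd.add (dvd_refl n) (Nat.dvd_sub_mod lo)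
  have key : lo + s % n ≡ t [MOD n] := by
    calc lo + s % n ≡ lo + s [MOD n] := (Nat.mod_modEq s n).add_left lo
      _ = t + (n + (lo - lo % n)) := by
          have h7 := Nat.mod_le lo n
          have h8 : lo % n < n := Nat.mod_lt lo hn
          omega
      _ ≡ t + 0 [MOD n] := (Nat.modEq_zero_iff_dvd.mpr h6).add_left t
      _ = t := add_zero t
  calc a * (lo + s % n) ≡ a * t [MOD n] := key.mul_left a
    _ ≡ a * (b * u) [MOD n] := ((Nat.mod_modEq (b * u) n).mul_left a)
    _ = (a * u) * b := by ring
    _ ≡ 1 * b [MOD n] := Nat.ModEq.mul_right b hu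
    _ = b := one_mul b

lemma ck_one (k : ℕ) : ck k 1 = 2 ^ k - 1 := by
  induction k with
  | zero => simp [ck]
  | succ k ih =>
    have h : 1 ≤ 2 ^ k := Nat.one_le_two_pow
    simp only [ck, Finset.sum_range_succ, mul_one] at ih ⊢
    rw [ih]
    have : (2:ℕ) ^ (k+1) = 2 * 2 ^ k := by ring
    omega

lemma ck_modeq (k : ℕ) : ck k k ≡ k [MOD 2 ^ k - 1] := by
  have h2k : (2:ℕ) ^ k ≡ 1 [MOD 2 ^ k - 1] :=
    ((Nat.modEq_iff_dvd' Nat.one_le_two_pow).mpr dvd_rfl).symm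
  have hterm : ∀ i : ℕ, (2:ℕ) ^ (i * k) ≡ 1 [MOD 2 ^ k - 1] := by
    intro i
    have := h2k.pow i
    rwa [← pow_mul, one_pow, mul_comm] at this
  have hsum : ∀ m : ℕ, (∑ i ∈ Finset.range m, 2 ^ (i * k)) ≡ m [MOD 2 ^ k - 1] := by
    intro m
    induction m with
    | zero => simpa using Nat.ModEq.refl 0
    | succ m ih =>
      rw [Finset.sum_range_succ]
      simpa using ih.add (hterm m)
  exact hsum k

theorem frobenius_bound (k : ℕ) (hk : 2 ≤ k) (N : ℕ) (hN : 2 ^ (k ^ 2 + k) < N) :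
    ∃ l : Multiset ℕ,
      (∀ x ∈ l, ∃ s : ℕ, IsBinaryKthPower k s ∧ x = s / Nat.gcd (2 ^ k - 1) k) ∧
      l.sum = N := by
  set M := 2 ^ k - 1 with hM
  set E := Nat.gcd M k with hE
  set c := ck k k with hc
  have h2k4 : (4:ℕ) ≤ 2 ^ k := by
    calc (4:ℕ) = 2 ^ 2 := by norm_num
    _ ≤ 2 ^ k := Nat.pow_le_pow_right (by norm_num) hk
  have hM1 : 1 ≤ M := by omega
  have hEpos : 0 < E := Nat.gcd_pos_of_pos_right _ (by omega)
  have hmodeq : c ≡ k [MOD M] := ck_modeq k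
  have hgcd : Nat.gcd M c = E := by
    rw [Nat.gcd_rec M c, hmodeq, ← Nat.gcd_rec M k]
  have hEM : E ∣ M := Nat.gcd_dvd_left M k
  have hEc : E ∣ c := hgcd ▸ Nat.gcd_dvd_right M c
  set d1 := M / E with hd1def
  set dk := c / E with hdkdef
  have hd1pos : 0 < d1 := Nat.div_pos (Nat.le_of_dvd (by omega) hEM) hEpos
  have hcop : Nat.Coprime dk d1 := by
    have := Nat.coprime_div_gcd_div_gcd (m := M) (n := c) (hgcd ▸ hEpos)
    rw [hgcd] at this
    exact this.symm
  have hd1le : d1 ≤ M := Nat.div_le_self _ _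
  have hdkle : dk ≤ c := Nat.div_le_self _ _
  have hklt : k ≤ 2 ^ (k - 1) := by
    have := Nat.lt_two_pow_self (n := k - 1)
    omega
  have hcle : c ≤ 2 ^ (k * k - 1) := by
    have h1 : c ≤ k * 2 ^ ((k - 1) * k) := by
      calc c = ∑ i ∈ Finset.range k, 2 ^ (i * k) := rfl
      _ ≤ ∑ _i ∈ Finset.range k, 2 ^ ((k - 1) * k) := by
          apply Finset.sum_le_sum
          intro i hi
          rw [Finset.mem_range] at hi
          exact Nat.pow_le_pow_right (by norm_num) (Nat.mul_le_mul_right k (by omega))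
      _ = k * 2 ^ ((k - 1) * k) := by
          rw [Finset.sum_const, Finset.card_range, smul_eq_mul]
    have h2 : k * 2 ^ ((k - 1) * k) ≤ 2 ^ (k - 1) * 2 ^ ((k - 1) * k) :=
      Nat.mul_le_mul_right _ hklt
    have h3 : (2:ℕ) ^ (k - 1) * 2 ^ ((k - 1) * k) = 2 ^ (k * k - 1) := by
      rw [← pow_add]
      congr 1
      cases k with
      | zero => omega
      | succ m =>
        simp only [Nat.succ_sub_one]
        have hq : m + m * (m + 1) + 1 = (m + 1) * (m + 1) := by ring
        omega
    omega
  obtain ⟨x, hx1, hx2, hx3⟩ := exists_in_interval dk d1 N (2 ^ (k - 1)) hd1pos hcop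
  have hxdk : dk * x ≤ 2 ^ (k ^ 2 + k) := by
    have hxle : x ≤ 2 ^ (k - 1) + 2 ^ k := by omega
    have h1 : dk * x ≤ 2 ^ (k * k - 1) * (2 ^ (k - 1) + 2 ^ k) :=
      Nat.mul_le_mul (le_trans hdkle hcle) hxle
    have h2 : (2:ℕ) ^ (k - 1) + 2 ^ k ≤ 2 ^ (k + 1) := by
      have e1 : (2:ℕ) ^ k = 2 * 2 ^ (k - 1) := by
        rw [← pow_succ']
        congr 1
        omega
      have e2 : (2:ℕ) ^ (k + 1) = 2 * 2 ^ k := by rw [pow_succ]; ring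
      omega
    have h3 : (2:ℕ) ^ (k * k - 1) * 2 ^ (k + 1) = 2 ^ (k ^ 2 + k) := by
      rw [← pow_add]
      congr 1
      have hsq : k ^ 2 = k * k := sq k
      have hkk : 1 ≤ k * k := Nat.one_le_iff_ne_zero.mpr (by positivity)
      omega
    calc dk * x ≤ 2 ^ (k * k - 1) * (2 ^ (k - 1) + 2 ^ k) := h1
      _ ≤ 2 ^ (k * k - 1) * 2 ^ (k + 1) := Nat.mul_le_mul_left _ h2
      _ = 2 ^ (k ^ 2 + k) := h3
  have hxdkN : dk * x ≤ N := by omega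
  have hdvd : d1 ∣ N - dk * x := (Nat.modEq_iff_dvd' hxdkN).mp hx3
  set m := (N - dk * x) / d1 with hmdef
  have hNm : N = dk * x + d1 * m := by
    have hh : d1 * m = N - dk * x := by
      rw [mul_comm]
      exact Nat.div_mul_cancel hdvd
    omega
  obtain ⟨P, hP, hPsum⟩ := parts_lemma x (2 ^ (k - 1)) (by positivity) hx1
  refine ⟨P.map (· * dk) + Multiset.replicate m d1, ?_, ?_⟩
  · intro y hy
    rw [Multiset.mem_add] at hy
    rcases hy with hy | hy
    · rw [Multiset.mem_map] at hy
      obtain ⟨a, haP, rfl⟩ := hy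
      obtain ⟨ha1, ha2⟩ := hP a haP
      refine ⟨a * c, ⟨k, a, by omega, ha1, ?_, rfl⟩, ?_⟩
      · have : 2 * 2 ^ (k - 1) = 2 ^ k := by
          rw [← pow_succ']
          congr 1
          omega
        omega
      · rw [Nat.mul_div_assoc a hEc]
    · rw [Multiset.eq_of_mem_replicate hy]
      refine ⟨M, ⟨1, 1, le_refl 1, by norm_num, by norm_num, ?_⟩, rfl⟩
      rw [ck_one, one_mul]
  · rw [Multiset.sum_add, Multiset.sum_replicate, smul_eq_mul]
    have hmap : (P.map (· * dk)).sum = P.sum * dk := by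
      simpa using Multiset.sum_map_mul_right (s := P) (f := fun i => i) (a := dk)
    rw [hmap, hPsum, mul_comm x dk, mul_comm m d1]
    omega
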